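/- The Bateman functions F_n(x) = (−1)^n e^{−x}(L_n(2x) − L_{n−1}(2x)) satisfy the differential equation x·F_n''(x) + (2n − x)·F_n(x) = 0 for all n ≥ 1 and all real x. -/

import Mathlib

/-- Laguerre polynomial `L_n(x) = Σ_{k=0}^n (−1)^k binom(n,k) x^k / k!`. -/
noncomputable def lagL (n : ℕ) (x : ℝ) : ℝ :=
  ∑ k ∈ Finset.range (n + 1), (-1) ^ k * (n.choose k : ℝ) * x ^ k / (k.factorial : ℝ)

/-- Bateman function `F_n(x) = (−1)^n e^{−x}(L_n(2x) − L_{n−1}(2x))`, with the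
convention `L_{−1} = 0`, so that `F_0(x) = e^{−x}`. -/
noncomputable def batemanF (n : ℕ) (x : ℝ) : ℝ :=
  if n = 0 then Real.exp (-x)
  else (-1) ^ n * Real.exp (-x) * (lagL n (2 * x) - lagL (n - 1) (2 * x))

/-- First "derivative" coefficient sum of `lagL`. -/
noncomputable def lagD (n : ℕ) (x : ℝ) : ℝ :=
  ∑ k ∈ Finset.range (n + 1), (-1) ^ (k+1) * (n.choose (k+1) : ℝ) * x ^ k / (k.factorial : ℝ)

/-- Second "derivative" coefficient sum of `lagL`. -/
noncomputable def lagD2 (n : ℕ) (x : ℝ) : ℝ :=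
  ∑ k ∈ Finset.range (n + 1), (-1) ^ k * (n.choose (k+2) : ℝ) * x ^ k / (k.factorial : ℝ)

lemma hasDerivAt_shape (a : ℕ → ℝ) (n : ℕ) (ha : a (n+1) = 0) (x : ℝ) :
    HasDerivAt (fun y => ∑ k ∈ Finset.range (n+1), a k * y^k / (k.factorial : ℝ))
      (∑ k ∈ Finset.range (n+1), a (k+1) * x^k / (k.factorial : ℝ)) x := by
  have h : ∀ k ∈ Finset.range (n+1),
      HasDerivAt (fun y : ℝ => a k * y^k / (k.factorial : ℝ))
        (a k * ((k:ℝ) * x^(k-1)) / (k.factorial : ℝ)) x := by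
    intro k _
    exact ((hasDerivAt_pow k x).const_mul (a k)).div_const _
  have H := HasDerivAt.fun_sum h
  refine H.congr_deriv ?_
  symm
  rw [Finset.sum_range_succ' (fun k => a k * ((k:ℝ) * x^(k-1)) / (k.factorial : ℝ)) n,
    Finset.sum_range_succ]
  simp only [ha, Nat.cast_zero, zero_mul, mul_zero, zero_div, add_zero, zero_add]
  apply Finset.sum_congr rfl
  intro k _
  rw [Nat.factorial_succ]
  push_cast
  have h1 : (k:ℝ) + 1 ≠ 0 := by positivity
  have h2 : (k.factorial : ℝ) ≠ 0 := by positivity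
  field_simp

lemma hasDerivAt_lagL (n : ℕ) (x : ℝ) : HasDerivAt (lagL n) (lagD n x) x := by
  have h := hasDerivAt_shape (fun k => (-1) ^ k * (n.choose k : ℝ)) n (by simp) x
  have e : lagD n x = ∑ k ∈ Finset.range (n+1),
      (fun k => (-1:ℝ)^k * (n.choose k:ℝ)) (k+1) * x^k / (k.factorial:ℝ) := by
    unfold lagD; exact Finset.sum_congr rfl fun k _ => rfl
  rw [e]; exact h

lemma hasDerivAt_lagD (n : ℕ) (x : ℝ) : HasDerivAt (lagD n) (lagD2 n x) x := by
  have h := hasDerivAt_shape (fun k => (-1) ^ (k+1) * (n.choose (k+1) : ℝ)) n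
    (by simp [Nat.choose_eq_zero_of_lt (by omega : n < n+1+1)]) x
  have e : lagD2 n x = ∑ k ∈ Finset.range (n+1),
      (fun k => (-1:ℝ)^(k+1) * (n.choose (k+1):ℝ)) (k+1) * x^k / (k.factorial:ℝ) := by
    unfold lagD2
    exact Finset.sum_congr rfl fun k _ => by simp only []; ring
  rw [e]; exact h

lemma lagA2 (m : ℕ) (y : ℝ) : lagD2 (m+1) y = lagD2 m y - lagD m y := by
  have h2 : lagD2 m y = ∑ k ∈ Finset.range (m+1+1),
      (-1:ℝ)^k * (m.choose (k+2):ℝ) * y^k/(k.factorial:ℝ) := by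
    rw [Finset.sum_range_succ, Nat.choose_eq_zero_of_lt (by omega)]
    simp [lagD2]
  have h3 : lagD m y = ∑ k ∈ Finset.range (m+1+1),
      (-1:ℝ)^(k+1) * (m.choose (k+1):ℝ) * y^k/(k.factorial:ℝ) := by
    rw [Finset.sum_range_succ, Nat.choose_eq_zero_of_lt (by omega)]
    simp [lagD]
  rw [lagD2, h2, h3, ← Finset.sum_sub_distrib]
  apply Finset.sum_congr rfl
  intro k _
  rw [Nat.choose_succ_succ m (k+1)]
  push_cast
  ring

lemma lagC (m : ℕ) (y : ℝ) :
    ((m:ℝ)+1) * lagL (m+1) y = ((m:ℝ)+1) * lagL m y + y * lagD (m+1) y := by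
  have h1 : lagL m y = ∑ k ∈ Finset.range (m+1+1),
      (-1:ℝ)^k * (m.choose k:ℝ) * y^k/(k.factorial:ℝ) := by
    rw [Finset.sum_range_succ, Nat.choose_eq_zero_of_lt (by omega)]
    simp [lagL]
  rw [← sub_eq_iff_eq_add', lagL, h1, lagD, Finset.mul_sum, Finset.mul_sum, Finset.mul_sum,
    ← Finset.sum_sub_distrib]
  conv_lhs => rw [Finset.sum_range_succ' _ (m+1)]
  conv_rhs => rw [Finset.sum_range_succ]
  rw [Nat.choose_succ_self (m+1)]
  norm_num
  rw [← Finset.sum_sub_distrib]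
  apply Finset.sum_congr rfl
  intro k _
  have hc : ((m:ℝ)+1) * (m.choose k:ℝ) = ((m.choose k:ℝ) + (m.choose (k+1):ℝ)) * ((k:ℝ)+1) := by
    have h := Nat.add_one_mul_choose_eq m k
    rw [Nat.choose_succ_succ] at h
    exact_mod_cast h
  rw [Nat.choose_succ_succ m k, Nat.factorial_succ]
  have h2 : (k.factorial:ℝ) ≠ 0 := by positivity
  have h3 : (k:ℝ)+1 ≠ 0 := by positivity
  push_cast
  linear_combination (norm := skip) ((-1:ℝ)^(k+1) * y^(k+1) / (((k:ℝ)+1) * (k.factorial:ℝ))) * hc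
  field_simp
  ring

/-- Explicit first derivative of the Bateman function (index `m+1`). -/
noncomputable def batemanFd (m : ℕ) (x : ℝ) : ℝ :=
  (-1:ℝ)^(m+1) * Real.exp (-x) *
    ((2*lagD (m+1) (2*x) - 2*lagD m (2*x)) - (lagL (m+1) (2*x) - lagL m (2*x)))

/-- Explicit second derivative of the Bateman function (index `m+1`). -/
noncomputable def batemanFdd (m : ℕ) (x : ℝ) : ℝ :=
  (-1:ℝ)^(m+1) * Real.exp (-x) *
    ((4*lagD2 (m+1) (2*x) - 4*lagD2 m (2*x))
      - 2*(2*lagD (m+1) (2*x) - 2*lagD m (2*x)) + (lagL (m+1) (2*x) - lagL m (2*x)))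

lemma batemanF_succ (m : ℕ) : batemanF (m+1) = fun x =>
    (-1:ℝ)^(m+1) * Real.exp (-x) * (lagL (m+1) (2*x) - lagL m (2*x)) := by
  funext x
  simp [batemanF]

lemma hasDerivAt_two_mul (x : ℝ) : HasDerivAt (fun x : ℝ => 2*x) 2 x := by
  simpa using (hasDerivAt_id x).const_mul 2

lemma hasDerivAt_cexp (m : ℕ) (x : ℝ) :
    HasDerivAt (fun x : ℝ => (-1:ℝ)^(m+1) * Real.exp (-x))
      ((-1:ℝ)^(m+1) * (-Real.exp (-x))) x := by
  have h : HasDerivAt (fun x : ℝ => Real.exp (-x)) (-Real.exp (-x)) x := by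
    exact ((Real.hasDerivAt_exp (-x)).comp x ((hasDerivAt_id x).neg)).congr_deriv (by simp)
  exact h.const_mul _

lemma hasDerivAt_batemanF (m : ℕ) (x : ℝ) :
    HasDerivAt (batemanF (m+1)) (batemanFd m x) x := by
  rw [batemanF_succ]
  have hA : HasDerivAt (fun x : ℝ => lagL (m+1) (2*x)) (lagD (m+1) (2*x) * 2) x :=
    (hasDerivAt_lagL (m+1) (2*x)).comp x (hasDerivAt_two_mul x)
  have hB : HasDerivAt (fun x : ℝ => lagL m (2*x)) (lagD m (2*x) * 2) x :=
    (hasDerivAt_lagL m (2*x)).comp x (hasDerivAt_two_mul x)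
  have H := (hasDerivAt_cexp m x).mul (hA.sub hB)
  refine H.congr_deriv ?_
  simp only [Pi.sub_apply]
  unfold batemanFd
  ring

lemma hasDerivAt_batemanFd (m : ℕ) (x : ℝ) :
    HasDerivAt (batemanFd m) (batemanFdd m x) x := by
  have hA : HasDerivAt (fun x : ℝ => lagL (m+1) (2*x)) (lagD (m+1) (2*x) * 2) x :=
    (hasDerivAt_lagL (m+1) (2*x)).comp x (hasDerivAt_two_mul x)
  have hB : HasDerivAt (fun x : ℝ => lagL m (2*x)) (lagD m (2*x) * 2) x :=
    (hasDerivAt_lagL m (2*x)).comp x (hasDerivAt_two_mul x)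
  have hDa : HasDerivAt (fun x : ℝ => lagD (m+1) (2*x)) (lagD2 (m+1) (2*x) * 2) x :=
    (hasDerivAt_lagD (m+1) (2*x)).comp x (hasDerivAt_two_mul x)
  have hDb : HasDerivAt (fun x : ℝ => lagD m (2*x)) (lagD2 m (2*x) * 2) x :=
    (hasDerivAt_lagD m (2*x)).comp x (hasDerivAt_two_mul x)
  have hP := ((hDa.const_mul 2).sub (hDb.const_mul 2)).sub (hA.sub hB)
  have H := (hasDerivAt_cexp m x).mul hP
  refine H.congr_deriv ?_
  simp only [Pi.sub_apply]
  unfold batemanFdd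
  ring

theorem bateman_differential_equation (n : ℕ) (hn : 1 ≤ n) (x : ℝ) :
    x * iteratedDeriv 2 (batemanF n) x + (2 * (n : ℝ) - x) * batemanF n x = 0 := by
  obtain ⟨m, rfl⟩ : ∃ m, n = m+1 := ⟨n-1, by omega⟩
  have hit : iteratedDeriv 2 (batemanF (m+1)) = batemanFdd m := by
    rw [show (2:ℕ) = 1+1 from rfl, iteratedDeriv_succ, iteratedDeriv_one]
    rw [funext fun y => (hasDerivAt_batemanF m y).deriv]
    exact funext fun y => (hasDerivAt_batemanFd m y).deriv
  rw [hit, batemanF_succ]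
  have hA2 := lagA2 m (2*x)
  have hC := lagC m (2*x)
  unfold batemanFdd
  push_cast
  linear_combination (4*x*((-1:ℝ)^(m+1) * Real.exp (-x))) * hA2
    + (2*((-1:ℝ)^(m+1) * Real.exp (-x))) * hC
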